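/- Let $\xi$ and $\eta$ be real random variables, and let $T, G$ be tail functions (i.e., nonincreasing, right-continuous functions with $T(0)=G(0)=1$, $T(\infty)=G(\infty)=0$) such that for all $x>0$, $\max(P(\xi>x),P(\xi<-x)) \le T(x)$ and $\max(P(\eta>x),P(\eta<-x)) \le G(x)$. Then for all $x>0$, $\max(P(\xi\eta>x),P(\xi\eta<-x)) \le \min(1,\,4\inf_{y>0}(T(y)+G(x/y)))$. -/
import Mathlib


open MeasureTheory

/-- Tail of the distribution of a real random variable. -/
noncomputable def tailD {Ω : Type*} [MeasurableSpace Ω] (μ : Measure Ω) (ξ : Ω → ℝ) (x : ℝ) : ℝ :=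
  max (μ {ω | x < ξ ω}).toReal (μ {ω | ξ ω < -x}).toReal

theorem stmt0 {Ω : Type*} [MeasurableSpace Ω] (μ : Measure Ω) [IsProbabilityMeasure μ]
    (ξ η : Ω → ℝ) (T G : ℝ → ℝ)
    (hTmono : Antitone T) (hGmono : Antitone G)
    (hTrc : ∀ x, ContinuousWithinAt T (Set.Ici x) x)
    (hGrc : ∀ x, ContinuousWithinAt G (Set.Ici x) x)
    (hT0 : T 0 = 1) (hG0 : G 0 = 1)
    (hTlim : Filter.Tendsto T Filter.atTop (nhds 0))
    (hGlim : Filter.Tendsto G Filter.atTop (nhds 0))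
    (hξ : ∀ x > 0, tailD μ ξ x ≤ T x)
    (hη : ∀ x > 0, tailD μ η x ≤ G x) :
    ∀ x > 0, tailD μ (fun ω => ξ ω * η ω) x ≤
      min 1 (4 * ⨅ y : Set.Ioi (0 : ℝ), (T y + G (x / y))) := by
  intro x hx
  set P : Ω → ℝ := fun ω => ξ ω * η ω with hP
  -- Key bound: for every y > 0, tailD μ P x ≤ 2 * (T y + G (x / y))
  have key : ∀ y : ℝ, 0 < y → tailD μ P x ≤ 2 * (T y + G (x / y)) := by
    intro y hy
    have hxy : 0 < x / y := div_pos hx hy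
    set S : Set Ω := ({ω | y < ξ ω} ∪ {ω | ξ ω < -y}) ∪
        ({ω | x / y < η ω} ∪ {ω | η ω < -(x / y)}) with hS
    have hsub : ∀ ω, (x < P ω ∨ P ω < -x) → ω ∈ S := by
      intro ω h
      by_contra hc
      simp only [hS, Set.mem_union, Set.mem_setOf_eq, not_or, not_lt] at hc
      obtain ⟨⟨h1, h2⟩, h3, h4⟩ := hc
      have hξa : |ξ ω| ≤ y := abs_le.2 ⟨h2, h1⟩
      have hηa : |η ω| ≤ x / y := abs_le.2 ⟨h4, h3⟩
      have habs : |P ω| ≤ x := by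
        calc |P ω| = |ξ ω| * |η ω| := abs_mul _ _
          _ ≤ y * (x / y) := mul_le_mul hξa hηa (abs_nonneg _) hy.le
          _ = x := by field_simp
      have h1' := le_abs_self (P ω)
      have h2' := neg_abs_le (P ω)
      rcases h with h | h <;> linarith
    have sub1 : {ω | x < P ω} ⊆ S := fun ω h => hsub ω (Or.inl h)
    have sub2 : {ω | P ω < -x} ⊆ S := fun ω h => hsub ω (Or.inr h)
    have hμS : (μ S).toReal ≤ 2 * (T y + G (x / y)) := by
      have hle : μ S ≤ μ {ω | y < ξ ω} + μ {ω | ξ ω < -y} +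
          (μ {ω | x / y < η ω} + μ {ω | η ω < -(x / y)}) := by
        refine le_trans (measure_union_le _ _) (add_le_add (measure_union_le _ _)
          (measure_union_le _ _))
      have htop : ∀ s : Set Ω, μ s ≠ ⊤ := fun s => measure_ne_top μ s
      have h1 : (μ {ω | y < ξ ω}).toReal ≤ T y :=
        le_trans (le_max_left _ _) (hξ y hy)
      have h2 : (μ {ω | ξ ω < -y}).toReal ≤ T y :=
        le_trans (le_max_right _ _) (hξ y hy)
      have h3 : (μ {ω | x / y < η ω}).toReal ≤ G (x / y) :=
        le_trans (le_max_left _ _) (hη (x / y) hxy)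
      have h4 : (μ {ω | η ω < -(x / y)}).toReal ≤ G (x / y) :=
        le_trans (le_max_right _ _) (hη (x / y) hxy)
      calc (μ S).toReal
          ≤ (μ {ω | y < ξ ω} + μ {ω | ξ ω < -y} +
              (μ {ω | x / y < η ω} + μ {ω | η ω < -(x / y)})).toReal := by
            refine ENNReal.toReal_mono ?_ hle
            exact ENNReal.add_ne_top.2 ⟨ENNReal.add_ne_top.2 ⟨htop _, htop _⟩,
              ENNReal.add_ne_top.2 ⟨htop _, htop _⟩⟩
        _ = (μ {ω | y < ξ ω}).toReal + (μ {ω | ξ ω < -y}).toReal +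
              ((μ {ω | x / y < η ω}).toReal + (μ {ω | η ω < -(x / y)}).toReal) := by
            rw [ENNReal.toReal_add (ENNReal.add_ne_top.2 ⟨htop _, htop _⟩)
              (ENNReal.add_ne_top.2 ⟨htop _, htop _⟩),
              ENNReal.toReal_add (htop _) (htop _), ENNReal.toReal_add (htop _) (htop _)]
        _ ≤ 2 * (T y + G (x / y)) := by linarith
    have b1 : (μ {ω | x < P ω}).toReal ≤ (μ S).toReal :=
      ENNReal.toReal_mono (measure_ne_top μ _) (measure_mono sub1)
    have b2 : (μ {ω | P ω < -x}).toReal ≤ (μ S).toReal :=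
      ENNReal.toReal_mono (measure_ne_top μ _) (measure_mono sub2)
    exact max_le (le_trans b1 hμS) (le_trans b2 hμS)
  have hnn : 0 ≤ tailD μ P x := le_trans ENNReal.toReal_nonneg (le_max_left _ _)
  refine le_min ?_ ?_
  · refine max_le ?_ ?_ <;>
      exact le_trans (ENNReal.toReal_mono ENNReal.one_ne_top prob_le_one)
        (le_of_eq ENNReal.toReal_one)
  · have hinf : tailD μ P x / 4 ≤ ⨅ y : Set.Ioi (0 : ℝ), (T y + G (x / y)) := by
      refine le_ciInf fun ⟨y, hy⟩ => ?_
      have := key y hy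
      simp only at this ⊢
      linarith
    linarith
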